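/- Let n ≥ 2 be a natural number, let γ be a real number with 0 < γ < n/2, and let h be a natural number. Let Y be a polynomial over ℝ in n+1 variables (MvPolynomial (Fin (n+1)) ℝ) which is homogeneous of degree h and formally harmonic. Define μ_s := Γ(s + n/2 + γ)/Γ(s + n/2 − γ). Then for every x ∈ ℝ^{n+1} with Σ_i x_i² = 1, writing Ŷ(x) for the evaluation of Y at x and (∂_jY)^(x) for the evaluation of pderiv j Y at x, one has: Σ_{j} x_j·( μ_{h+1}·( x_j·Ŷ(x) + (1/(1 − n − 2h))·(∂_jY)^(x) ) − μ_{h−1}·(1/(1 − n − 2h))·(∂_jY)^(x) ) − μ_h·Ŷ(x) = γ·(n + 2γ − 2)·(Γ(h + n/2 + γ − 1)/Γ(h + n/2 − γ + 1))·Ŷ(x). -/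

import Mathlib

open Real MvPolynomial

/-- `P` is formally harmonic: `Σ_i ∂_i ∂_i P = 0`. -/
def IsFormallyHarmonicReal {N : ℕ} (P : MvPolynomial (Fin N) ℝ) : Prop :=
  ∑ i : Fin N, pderiv i (pderiv i P) = 0

/-- the commutator identity
`Σ_j x_j[P_{2γ}, x_j]Y = γ(n + 2γ − 2)P_{2(γ−1)}Y` of Theorem 1.7, evaluated on
a degree-`h` spherical harmonic `Y` at a point `x ∈ S^n ⊂ ℝ^{n+1}`, written via
the harmonic decomposition
`x_j·Y = (x_j·Y + |x|²∂_j Y/(1−n−2h)) − |x|²∂_j Y/(1−n−2h)`.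
Here `μ_s = Γ(s + n/2 + γ)/Γ(s + n/2 − γ)`. -/
lemma mon_step {N : ℕ} (d : Fin N →₀ ℕ) (c : ℝ) (j : Fin N) :
    X j * pderiv j (monomial d c) = monomial d (c * (d j : ℝ)) := by
  rw [pderiv_monomial]
  rcases Nat.eq_zero_or_pos (d j) with h0 | hpos
  · simp [h0]
  · have hd : (Finsupp.single j 1) + (d - Finsupp.single j 1) = d := by
      ext k
      simp only [Finsupp.add_apply, Finsupp.tsub_apply, Finsupp.single_apply]
      rcases eq_or_ne j k with rfl | hk
      · simp; omega
      · simp [hk]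
    rw [X, monomial_mul, one_mul, hd]

lemma euler_eval {N : ℕ} {h : ℕ} (Y : MvPolynomial (Fin N) ℝ) (hY : Y.IsHomogeneous h)
    (x : Fin N → ℝ) : ∑ j : Fin N, x j * eval x (pderiv j Y) = (h : ℝ) * eval x Y := by
  have key : ∑ j : Fin N, X j * pderiv j Y = C (h : ℝ) * Y := by
    conv_lhs => rw [Y.as_sum]
    simp only [map_sum, Finset.mul_sum]
    rw [Finset.sum_comm]
    conv_rhs => rw [Y.as_sum, Finset.mul_sum]
    apply Finset.sum_congr rfl
    intro d hd
    have hdeg : ∑ j : Fin N, d j = h := by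
      have h1 := hY (mem_support_iff.mp hd)
      change Finsupp.weight (fun _ => 1) d = h at h1
      rw [← Finsupp.degree_eq_weight_one] at h1
      rw [← h1, Finsupp.degree_apply]
      exact (Finset.sum_subset (Finset.subset_univ _)
        (fun i _ hi => Finsupp.notMem_support_iff.mp hi)).symm
    calc ∑ j : Fin N, X j * pderiv j (monomial d (coeff d Y))
        = ∑ j : Fin N, monomial d (coeff d Y * (d j : ℝ)) :=
          Finset.sum_congr rfl fun j _ => mon_step d (coeff d Y) j
      _ = monomial d (coeff d Y * (h : ℝ)) := by
          rw [← map_sum, ← Finset.mul_sum, ← Nat.cast_sum, hdeg]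
      _ = C (h : ℝ) * monomial d (coeff d Y) := by
          rw [C_mul_monomial, mul_comm]
  have := congrArg (eval x) key
  simpa using this

lemma scalar (n h γ : ℝ) (hn2 : 2 ≤ n) (hγ0 : 0 < γ) (hγn : γ < n / 2)
    (hc : h = 0 ∨ 1 ≤ h) :
    Gamma (h + 1 + n / 2 + γ) / Gamma (h + 1 + n / 2 - γ) +
      (Gamma (h + 1 + n / 2 + γ) / Gamma (h + 1 + n / 2 - γ) -
        Gamma (h - 1 + n / 2 + γ) / Gamma (h - 1 + n / 2 - γ)) * (1 / (1 - n - 2 * h)) * h -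
      Gamma (h + n / 2 + γ) / Gamma (h + n / 2 - γ) =
    γ * (n + 2 * γ - 2) * (Gamma (h + n / 2 + γ - 1) / Gamma (h + n / 2 - γ + 1)) := by
  rcases hc with rfl | hh1
  · obtain ⟨a, ha⟩ : ∃ a : ℝ, a = 0 + n / 2 := ⟨_, rfl⟩
    have hapg1 : 0 < a + γ - 1 := by rw [ha]; linarith
    have hamg : 0 < a - γ := by rw [ha]; linarith
    have hapg : 0 < a + γ := by rw [ha]; linarith
    have e1 : Gamma (0 + 1 + n / 2 + γ) = (a + γ) * Gamma (a + γ) := by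
      rw [← Real.Gamma_add_one hapg.ne']; congr 1; rw [ha]; ring
    have e2 : Gamma (0 + 1 + n / 2 - γ) = (a - γ) * Gamma (a - γ) := by
      rw [← Real.Gamma_add_one hamg.ne']; congr 1; rw [ha]; ring
    have e5 : Gamma (0 + n / 2 + γ) = Gamma (a + γ) := by congr 1; rw [ha]
    have e6 : Gamma (0 + n / 2 - γ) = Gamma (a - γ) := by congr 1; rw [ha]
    have e7 : Gamma (0 + n / 2 + γ - 1) = Gamma (a + γ - 1) := by congr 1; rw [ha]
    have e8 : Gamma (0 + n / 2 - γ + 1) = (a - γ) * Gamma (a - γ) := by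
      rw [← Real.Gamma_add_one hamg.ne']; congr 1; rw [ha]
    have eX : Gamma (a + γ) = (a + γ - 1) * Gamma (a + γ - 1) := by
      rw [← Real.Gamma_add_one hapg1.ne']; congr 1; ring
    have hnn : n = 2 * a := by rw [ha]; ring
    have hG1 : 0 < Gamma (a + γ - 1) := Gamma_pos_of_pos hapg1
    have hG2 : 0 < Gamma (a - γ) := Gamma_pos_of_pos hamg
    rw [mul_zero, add_zero, e1, e2, e5, e6, e7, e8, eX, hnn]
    field_simp [hG1.ne', hG2.ne', hamg.ne', hapg.ne', hapg1.ne']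
    ring
  · obtain ⟨a, ha⟩ : ∃ a : ℝ, a = h + n / 2 := ⟨_, rfl⟩
    have hapg1 : 0 < a + γ - 1 := by rw [ha]; linarith
    have hamg1 : 0 < a - γ - 1 := by rw [ha]; linarith
    have hamg : 0 < a - γ := by linarith
    have hapg : 0 < a + γ := by linarith
    have e1 : Gamma (h + 1 + n / 2 + γ) = (a + γ) * Gamma (a + γ) := by
      rw [← Real.Gamma_add_one hapg.ne']; congr 1; rw [ha]; ring
    have e2 : Gamma (h + 1 + n / 2 - γ) = (a - γ) * Gamma (a - γ) := by
      rw [← Real.Gamma_add_one hamg.ne']; congr 1; rw [ha]; ring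
    have e3 : Gamma (h - 1 + n / 2 + γ) = Gamma (a + γ - 1) := by
      congr 1; rw [ha]; ring
    have e4 : Gamma (h - 1 + n / 2 - γ) = Gamma (a - γ - 1) := by
      congr 1; rw [ha]; ring
    have e5 : Gamma (h + n / 2 + γ) = Gamma (a + γ) := by congr 1; rw [ha]
    have e6 : Gamma (h + n / 2 - γ) = Gamma (a - γ) := by congr 1; rw [ha]
    have e7 : Gamma (h + n / 2 + γ - 1) = Gamma (a + γ - 1) := by congr 1; rw [ha]
    have e8 : Gamma (h + n / 2 - γ + 1) = (a - γ) * Gamma (a - γ) := by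
      rw [← Real.Gamma_add_one hamg.ne']; congr 1; rw [ha]
    have eX : Gamma (a + γ) = (a + γ - 1) * Gamma (a + γ - 1) := by
      rw [← Real.Gamma_add_one hapg1.ne']; congr 1; ring
    have eY : Gamma (a - γ) = (a - γ - 1) * Gamma (a - γ - 1) := by
      rw [← Real.Gamma_add_one hamg1.ne']; congr 1; ring
    have hnn : n = 2 * a - 2 * h := by rw [ha]; ring
    have hG1 : 0 < Gamma (a + γ - 1) := Gamma_pos_of_pos hapg1
    have hG2 : 0 < Gamma (a - γ - 1) := Gamma_pos_of_pos hamg1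
    have h2a : (1:ℝ) - 2 * a ≠ 0 := by rw [ha]; intro hco; nlinarith
    rw [e1, e2, e3, e4, e5, e6, e7, e8, eX, eY, hnn]
    have hden : (1:ℝ) - (2 * a - 2 * h) - 2 * h = 1 - 2 * a := by ring
    rw [hden]
    have hinv : (1 - a * 2)⁻¹ * (1 - a * 2) = 1 :=
      inv_mul_cancel₀ (by intro hco; apply h2a; linarith)
    field_simp
    linear_combination (-2 * γ * h) * hinv

theorem stmt_3 (n : ℕ) (hn : 2 ≤ n) (γ : ℝ) (hγ0 : 0 < γ) (hγn : γ < (n : ℝ) / 2)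
    (h : ℕ) (Y : MvPolynomial (Fin (n + 1)) ℝ)
    (hhom : Y.IsHomogeneous h) (hharm : IsFormallyHarmonicReal Y)
    (x : Fin (n + 1) → ℝ) (hx : ∑ i : Fin (n + 1), x i ^ 2 = 1) :
    ∑ j : Fin (n + 1), x j *
        ((Gamma (((h : ℝ) + 1) + (n : ℝ) / 2 + γ) / Gamma (((h : ℝ) + 1) + (n : ℝ) / 2 - γ)) *
            (x j * eval x Y + (1 / (1 - (n : ℝ) - 2 * (h : ℝ))) * eval x (pderiv j Y)) -
          (Gamma (((h : ℝ) - 1) + (n : ℝ) / 2 + γ) / Gamma (((h : ℝ) - 1) + (n : ℝ) / 2 - γ)) *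
            (1 / (1 - (n : ℝ) - 2 * (h : ℝ))) * eval x (pderiv j Y)) -
      (Gamma ((h : ℝ) + (n : ℝ) / 2 + γ) / Gamma ((h : ℝ) + (n : ℝ) / 2 - γ)) * eval x Y =
    γ * ((n : ℝ) + 2 * γ - 2) *
      (Gamma ((h : ℝ) + (n : ℝ) / 2 + γ - 1) / Gamma ((h : ℝ) + (n : ℝ) / 2 - γ + 1)) *
      eval x Y := by
  have heuler := euler_eval Y hhom x
  have hstep : ∀ μp μm d : ℝ, ∑ j : Fin (n + 1), x j *
        (μp * (x j * eval x Y + d * eval x (pderiv j Y)) - μm * d * eval x (pderiv j Y)) =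
      μp * eval x Y + (μp * d - μm * d) * ((h : ℝ) * eval x Y) := by
    intro μp μm d
    have key : ∀ j : Fin (n + 1), x j *
        (μp * (x j * eval x Y + d * eval x (pderiv j Y)) - μm * d * eval x (pderiv j Y)) =
        μp * eval x Y * (x j ^ 2) + (μp * d - μm * d) * (x j * eval x (pderiv j Y)) := by
      intro j; ring
    rw [Finset.sum_congr rfl fun j _ => key j, Finset.sum_add_distrib, ← Finset.mul_sum,
      ← Finset.mul_sum, hx, heuler, mul_one]
  rw [hstep _ _ _]
  have hn2 : (2:ℝ) ≤ (n:ℝ) := by exact_mod_cast hn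
  have hc : (h:ℝ) = 0 ∨ 1 ≤ (h:ℝ) := by
    rcases Nat.eq_zero_or_pos h with h0 | h1
    · left; exact_mod_cast h0
    · right; exact_mod_cast h1
  have main := scalar (n:ℝ) (h:ℝ) γ hn2 hγ0 hγn hc
  linear_combination (eval x Y) * main
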